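/- For every x ∈ ℝ and t ∈ [0,T), one has the explicit formula ∂_x m₁^{(1)}(x,t) = (1/(πi)) ∫₁^∞ e^{-(T-t)y²/4} e^{-t/(4y²)} · ((y + 1/y)/2) · Re[ e^{-i(x-x₀)y/2} e^{-ix/(2y)} f₁(i/y) (ω + ω²/y²) ] dy. -/

import Mathlib

open MeasureTheory Filter Topology

noncomputable section

namespace Paper

/-- Iterated logarithm: `iterLog r` is the `r`-th iterate of `Real.log`. -/
def iterLog : ℕ → ℝ → ℝ
  | 0, s => s
  | r + 1, s => Real.log (iterLog r s)

/-- `LOG(s; r⃗, a⃗, σ) = (-1)^σ ∏_j (log_{r_j} s)^{a_j}` (empty product convention for `p = 0`). -/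
def LOG {p : ℕ} (r : Fin p → ℕ) (a : Fin p → ℝ) (σ : ℕ) (s : ℝ) : ℝ :=
  (-1 : ℝ) ^ σ * ∏ j : Fin p, iterLog (r j) s ^ a j

/-- `f(t) ≍ g(t)` as `t → T⁻`: there are `T₀ ∈ (0,T)` and `c₁, c₂ > 0` with
`c₁ g(t) ≤ f(t) ≤ c₂ g(t)` for all `t ∈ [T₀, T)`. -/
def AsympTo (T : ℝ) (f g : ℝ → ℝ) : Prop :=
  ∃ T₀ ∈ Set.Ioo (0 : ℝ) T, ∃ c₁ > (0 : ℝ), ∃ c₂ > (0 : ℝ),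
    ∀ t ∈ Set.Ico T₀ T, c₁ * g t ≤ f t ∧ f t ≤ c₂ * g t

/-- Partial derivative in `x`. -/
def px (u : ℝ → ℝ → ℝ) : ℝ → ℝ → ℝ := fun x t => deriv (fun x' => u x' t) x

/-- Partial derivative in `t`. -/
def pt (u : ℝ → ℝ → ℝ) : ℝ → ℝ → ℝ := fun x t => deriv (fun t' => u x t') t

/-- Mixed partial derivative `∂_x^{q₁} ∂_t^{q₂}` for real-valued functions. -/
def pdR (q₁ q₂ : ℕ) (u : ℝ → ℝ → ℝ) : ℝ → ℝ → ℝ :=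
  fun x t => iteratedDeriv q₁ (fun x' => iteratedDeriv q₂ (fun t' => u x' t') t) x

/-- Mixed partial derivative `∂_x^{q₁} ∂_t^{q₂}` for complex-valued functions. -/
def pdC (q₁ q₂ : ℕ) (g : ℝ → ℝ → ℂ) : ℝ → ℝ → ℂ :=
  fun x t => iteratedDeriv q₁ (fun x' => iteratedDeriv q₂ (fun t' => g x' t') t) x

/-- Schwartz class solution of the "bad" Boussinesq equation
`u_tt = u_xx + (u²)_xx + u_xxxx` on `ℝ × [0,T)`. -/
def IsSchwartzSolution (T : ℝ) (u : ℝ → ℝ → ℝ) : Prop :=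
  ContDiffOn ℝ (⊤ : ℕ∞) (fun q : ℝ × ℝ => u q.1 q.2) (Set.univ ×ˢ Set.Ico 0 T) ∧
  (∀ x : ℝ, ∀ t ∈ Set.Ico (0 : ℝ) T,
      pt (pt u) x t =
        px (px u) x t + px (px fun x' t' => u x' t' ^ 2) x t + px (px (px (px u))) x t) ∧
  (∀ N : ℕ, 1 ≤ N → ∀ τ ∈ Set.Ico (0 : ℝ) T, ∃ B : ℝ, ∀ x : ℝ, ∀ t ∈ Set.Icc (0 : ℝ) τ,
      ∑ i ∈ Finset.range (N + 1), (1 + |x|) ^ N * |iteratedDeriv i (fun x' => u x' t) x| ≤ B)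

/-- `ω = e^{2πi/3}`. -/
def ω : ℂ := Complex.exp (2 * Real.pi * Complex.I / 3)

/-- `e₁ = e^{-iπ/6}`. -/
def e₁ : ℂ := Complex.exp (-(Real.pi / 6) * Complex.I)

/-- `e₂ = e^{5iπ/6}`. -/
def e₂ : ℂ := Complex.exp (5 * Real.pi / 6 * Complex.I)

/-- `e₃ = e^{iπ/6}`. -/
def e₃ : ℂ := Complex.exp (Real.pi / 6 * Complex.I)

/-- `e₄ = e^{7iπ/6}`. -/
def e₄ : ℂ := Complex.exp (7 * Real.pi / 6 * Complex.I)

/-- Contour integral over `Γ̃ = {r e^{-iπ/6} : r > 1} ∪ {r e^{5iπ/6} : r > 1}`,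
each ray oriented in the direction of increasing modulus. -/
def contourInt (g : ℂ → ℂ) : ℂ :=
  (∫ r in Set.Ioi (1 : ℝ), g ((r : ℂ) * e₁)) * e₁ +
  (∫ r in Set.Ioi (1 : ℝ), g ((r : ℂ) * e₂)) * e₂

/-- The contour `Γ̃` as a set. -/
def Gammat : Set ℂ :=
  {k : ℂ | ∃ r : ℝ, 1 < r ∧ k = (r : ℂ) * e₁} ∪ {k : ℂ | ∃ r : ℝ, 1 < r ∧ k = (r : ℂ) * e₂}

/-- `Γ̃_m = Γ̃ ∩ {k : |k| > 2}`. -/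
def GammatM : Set ℂ := Gammat ∩ {k : ℂ | 2 < ‖k‖}

/-- The set `S`: the closure of
`{r e^{iπ/6} : r > 1} ∪ {r e^{7iπ/6} : r > 1} ∪ {r e^{5iπ/6} : 0 < r < 1} ∪ {r e^{-iπ/6} : 0 < r < 1}`. -/
def Sset : Set ℂ :=
  closure ({k : ℂ | ∃ r : ℝ, 1 < r ∧ k = (r : ℂ) * e₃} ∪
    {k : ℂ | ∃ r : ℝ, 1 < r ∧ k = (r : ℂ) * e₄} ∪
    {k : ℂ | ∃ r : ℝ, 0 < r ∧ r < 1 ∧ k = (r : ℂ) * e₂} ∪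
    {k : ℂ | ∃ r : ℝ, 0 < r ∧ r < 1 ∧ k = (r : ℂ) * e₁})

/-- `r̃(k) = (ω² - k²)/(1 - ω²k²)`. -/
def rtilde (k : ℂ) : ℂ := (ω ^ 2 - k ^ 2) / (1 - ω ^ 2 * k ^ 2)

/-- `f̃₀`: equals `f₂(k) = r̃(k) conj(f₁(1/conj k))` on the upper ray `(i, i∞)`
and `f₁(1/k)` on the lower ray `(-i, -i∞)`. -/
def ftilde0 (f₁ : ℂ → ℂ) (k : ℂ) : ℂ :=
  if 0 < k.im then rtilde k * starRingEnd ℂ (f₁ (1 / starRingEnd ℂ k)) else f₁ (1 / k)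

/-- The kernel `F(x,t,k,k₁)`. -/
def Fker (x₀ T : ℝ) (f₁ : ℂ → ℂ) (x t : ℝ) (k k₁ : ℂ) : ℂ :=
  Complex.exp (((x - x₀ : ℝ) : ℂ) / 2 * (ω * k₁)) *
  Complex.exp (((T - t : ℝ) : ℂ) / 4 * (ω * k₁) ^ 2) *
  (ω ^ 2 / (ω ^ 2 * k₁ - k) - ω / k₁ ^ 2 / (1 / (ω ^ 2 * k₁) - k)) *
  (ftilde0 f₁ (ω * k₁) *
    Complex.exp (-((x : ℂ) / 2) * (1 / (ω * k₁)) + (t : ℂ) / 4 * (1 / (ω * k₁)) ^ 2) /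
    (2 * (Real.pi : ℂ) * Complex.I))

/-- Iterated kernels: `mSeq F j` is `m_j`, with `mSeq F 0 ≡ 1` and
`m_{j+1}(k) = ∫_{Γ̃} F(k,k₁) m_j(k₁) dk₁`. -/
def mSeq (F : ℂ → ℂ → ℂ) : ℕ → ℂ → ℂ
  | 0 => fun _ => 1
  | j + 1 => fun k => contourInt fun k₁ => F k k₁ * mSeq F j k₁

/-- `m(x,t,k) = 1 + Σ_{j=1}^∞ m_j(x,t,k)`. -/
def mFun (x₀ T : ℝ) (f₁ : ℂ → ℂ) (x t : ℝ) (k : ℂ) : ℂ :=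
  1 + ∑' j : ℕ, mSeq (Fker x₀ T f₁ x t) (j + 1) k

/-- `F^{(1)}(x,t,k₁)`. -/
def F1ker (x₀ T : ℝ) (f₁ : ℂ → ℂ) (x t : ℝ) (k₁ : ℂ) : ℂ :=
  -(Complex.exp (((x - x₀ : ℝ) : ℂ) / 2 * (ω * k₁)) *
    Complex.exp (((T - t : ℝ) : ℂ) / 4 * (ω * k₁) ^ 2) *
    Complex.exp (-((x : ℂ) / 2) * (1 / (ω * k₁)) + (t : ℂ) / 4 * (1 / (ω * k₁)) ^ 2) *
    (ftilde0 f₁ (ω * k₁) / (2 * (Real.pi : ℂ) * Complex.I)) * (ω ^ 2 - ω / k₁ ^ 2))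

/-- `m1Seq x₀ T f₁ x t j = m_{j+1}^{(1)}(x,t)`, i.e. `m_j^{(1)} = m1Seq … (j-1)` for `j ≥ 1`. -/
def m1Seq (x₀ T : ℝ) (f₁ : ℂ → ℂ) (x t : ℝ) (j : ℕ) : ℂ :=
  contourInt fun k₁ => F1ker x₀ T f₁ x t k₁ * mSeq (Fker x₀ T f₁ x t) j k₁

end Paper

open Paper

namespace Paper

lemma omega_mul_e1 : ω * e₁ = Complex.I := by
  rw [ω, e₁, ← Complex.exp_add]
  have : 2 * (Real.pi:ℂ) * Complex.I / 3 + -(↑Real.pi / 6) * Complex.I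
      = (↑(Real.pi/2) : ℂ) * Complex.I := by push_cast; ring
  rw [this, Complex.exp_mul_I, ← Complex.ofReal_cos, ← Complex.ofReal_sin,
    Real.cos_pi_div_two, Real.sin_pi_div_two]
  simp

lemma e2_eq : e₂ = -e₁ := by
  rw [e₂, e₁]
  have : 5 * (Real.pi:ℂ) / 6 * Complex.I = ↑Real.pi * Complex.I + -(↑Real.pi / 6) * Complex.I := by
    ring
  rw [this, Complex.exp_add, Complex.exp_pi_mul_I]; ring

lemma omega_cube : ω ^ 3 = 1 := by
  rw [ω, ← Complex.exp_nat_mul]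
  rw [show ((3:ℕ):ℂ) * (2 * ↑Real.pi * Complex.I / 3) = 2 * ↑Real.pi * Complex.I by
    push_cast; ring]
  exact Complex.exp_two_pi_mul_I

lemma omega_ne_zero : ω ≠ 0 := Complex.exp_ne_zero _

lemma e1_eq : e₁ = Complex.I * ω ^ 2 := by
  have h3 := omega_cube
  refine mul_left_cancel₀ omega_ne_zero ?_
  rw [omega_mul_e1]
  linear_combination -Complex.I * h3

lemma conj_omega : (starRingEnd ℂ) ω = ω ^ 2 := by
  rw [ω, ← Complex.exp_conj]
  rw [show (starRingEnd ℂ) (2 * ↑Real.pi * Complex.I / 3) = -(2 * ↑Real.pi * Complex.I / 3) by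
    simp only [map_div₀, map_mul, Complex.conj_I, Complex.conj_ofReal, map_ofNat]; ring]
  rw [← Complex.exp_nat_mul]
  rw [show ((2:ℕ):ℂ) * (2 * ↑Real.pi * Complex.I / 3)
      = 2*↑Real.pi*Complex.I + -(2 * ↑Real.pi * Complex.I / 3) by push_cast; ring]
  rw [Complex.exp_add, Complex.exp_two_pi_mul_I, one_mul]

lemma abs_omega : ‖ω‖ = 1 := by
  rw [ω, Complex.norm_exp]; norm_num

lemma omega_sq_ne_zero : ω ^ 2 ≠ 0 := pow_ne_zero _ omega_ne_zero

lemma denom_ne_zero {r : ℝ} (hr : 1 < r) : (1 : ℂ) + ω ^ 2 * (r:ℂ) ^ 2 ≠ 0 := by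
  intro h
  have h2 : ω ^ 2 * (r:ℂ) ^ 2 = -1 := by linear_combination h
  have := congrArg (‖·‖) h2
  rw [norm_mul, norm_pow, norm_pow, abs_omega, Complex.norm_real, Real.norm_eq_abs] at this
  simp only [norm_neg, norm_one] at this
  have hr' : |r| = r := abs_of_pos (by linarith)
  rw [hr'] at this
  nlinarith

/-- the `x`-independent coefficient on the ray `e₁`. -/
def Cc1 (x₀ T t : ℝ) (f₁ : ℂ → ℂ) (r : ℝ) : ℂ :=
  -(Complex.exp (-(Complex.I * r * x₀) / 2 - (T - t) * (r:ℂ)^2 / 4 - t/(4*(r:ℂ)^2)) *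
    ((starRingEnd ℂ) (f₁ (Complex.I / r)) * (ω^2 + (r:ℂ)^2) /
      (2 * Real.pi * Complex.I * (r:ℂ)^2)))

/-- the `x`-independent coefficient on the ray `e₂`. -/
def Cc2 (x₀ T t : ℝ) (f₁ : ℂ → ℂ) (r : ℝ) : ℂ :=
  -(Complex.exp ((Complex.I * r * x₀) / 2 - (T - t) * (r:ℂ)^2 / 4 - t/(4*(r:ℂ)^2)) *
    (f₁ (Complex.I / r) * (ω^2 + ((r:ℂ)^2)⁻¹) / (2 * Real.pi * Complex.I)))

/-- the `x`-dependence rate. -/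
def Aa (r : ℝ) : ℂ := Complex.I * ((r:ℂ) + (r:ℂ)⁻¹) / 2

lemma F1_ray1 (x₀ T : ℝ) (f₁ : ℂ → ℂ) (x' t : ℝ) {r : ℝ} (hr : 1 < r) :
    F1ker x₀ T f₁ x' t ((r:ℂ) * e₁) = Cc1 x₀ T t f₁ r * Complex.exp ((x':ℂ) * Aa r) := by
  have hr0 : (r:ℂ) ≠ 0 := by
    simp only [ne_eq, Complex.ofReal_eq_zero]; intro h; linarith [h ▸ hr]
  have hk : ω * ((r:ℂ) * e₁) = (r:ℂ) * Complex.I := by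
    rw [show ω * ((r:ℂ) * e₁) = (r:ℂ) * (ω * e₁) by ring, omega_mul_e1]
  have him : (0:ℝ) < ((r:ℂ) * Complex.I).im := by
    simp only [Complex.mul_I_im, Complex.ofReal_re]; linarith
  have hconj : (starRingEnd ℂ) ((r:ℂ) * Complex.I) = -((r:ℂ) * Complex.I) := by
    simp [Complex.conj_I]
  have hIr : (1:ℂ) / (-((r:ℂ) * Complex.I)) = Complex.I / r := by
    rw [div_eq_div_iff (neg_ne_zero.mpr (mul_ne_zero hr0 Complex.I_ne_zero)) hr0]
    linear_combination (r:ℂ) * Complex.I_sq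
  have hinv : 1 / (starRingEnd ℂ) ((r:ℂ) * Complex.I) = Complex.I / r := by
    rw [hconj, hIr]
  have hft : ftilde0 f₁ (ω * ((r:ℂ) * e₁))
      = (ω^2 + (r:ℂ)^2)/(1 + ω^2*(r:ℂ)^2) * (starRingEnd ℂ) (f₁ (Complex.I / r)) := by
    rw [hk, ftilde0, if_pos him, hinv, rtilde]
    rw [show ((r:ℂ) * Complex.I)^2 = -(r:ℂ)^2 by
      rw [mul_pow, Complex.I_sq]; ring]
    ring
  have he1sq : e₁ ^ 2 = -ω := by
    rw [e1_eq]
    rw [show (Complex.I * ω ^ 2)^2 = Complex.I^2 * (ω^3 * ω) by ring, Complex.I_sq, omega_cube]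
    ring
  have hk2 : ((r:ℂ) * e₁)^2 = -(r:ℂ)^2 * ω := by rw [mul_pow, he1sq]; ring
  have hfac : ω ^ 2 - ω / ((r:ℂ) * e₁) ^ 2 = (1 + ω^2*(r:ℂ)^2) / (r:ℂ)^2 := by
    rw [hk2]; field_simp [omega_ne_zero]
    ring_nf
  rw [F1ker, hft, hfac, hk]
  rw [Cc1, Aa]
  have hd := denom_ne_zero hr
  have hπ : (Real.pi : ℂ) ≠ 0 := by
    simp only [ne_eq, Complex.ofReal_eq_zero]; exact Real.pi_ne_zero
  have hexp : ((x' - x₀ : ℝ) : ℂ) / 2 * ((r:ℂ) * Complex.I)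
      + ((T - t : ℝ) : ℂ) / 4 * ((r:ℂ) * Complex.I) ^ 2
      + (-((x' : ℂ) / 2) * (1 / ((r:ℂ) * Complex.I)) + (t : ℂ) / 4 * (1 / ((r:ℂ) * Complex.I)) ^ 2)
      = -(Complex.I * r * x₀) / 2 - ((T:ℂ) - t) * (r:ℂ)^2 / 4 - (t:ℂ)/(4*(r:ℂ)^2)
        + (x':ℂ) * (Complex.I * ((r:ℂ) + (r:ℂ)⁻¹) / 2) := by
    have hI := Complex.I_sq
    have hrr : (r:ℂ) * (r:ℂ)⁻¹ = 1 := mul_inv_cancel₀ hr0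
    have hinv2 : 1 / ((r:ℂ) * Complex.I) = -(Complex.I * (r:ℂ)⁻¹) := by
      rw [div_eq_iff (mul_ne_zero hr0 Complex.I_ne_zero)]
      linear_combination ((r:ℂ)*(r:ℂ)⁻¹) * hI - hrr
    push_cast
    rw [hinv2]
    linear_combination (((T:ℂ)-(t:ℂ))*(r:ℂ)^2/4 + (t:ℂ)*((r:ℂ)⁻¹)^2/4) * hI
  have hco : (ω ^ 2 + (r:ℂ) ^ 2) / (1 + ω ^ 2 * (r:ℂ) ^ 2) *
        (starRingEnd ℂ) (f₁ (Complex.I / (r:ℂ))) / (2 * (Real.pi:ℂ) * Complex.I) *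
        ((1 + ω ^ 2 * (r:ℂ) ^ 2) / (r:ℂ) ^ 2)
      = (starRingEnd ℂ) (f₁ (Complex.I / (r:ℂ))) * (ω ^ 2 + (r:ℂ) ^ 2) /
        (2 * (Real.pi:ℂ) * Complex.I * (r:ℂ) ^ 2) := by
    have hbb : (1 + ω^2*(r:ℂ)^2) * (1 + ω^2*(r:ℂ)^2)⁻¹ = 1 := mul_inv_cancel₀ hd
    linear_combination ((ω^2+(r:ℂ)^2) * (starRingEnd ℂ) (f₁ (Complex.I / (r:ℂ)))
      * (2*(Real.pi:ℂ)*Complex.I)⁻¹ * ((r:ℂ)^2)⁻¹) * hbb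
  rw [← Complex.exp_add, ← Complex.exp_add, hexp, Complex.exp_add]
  linear_combination (-(Complex.exp (-(Complex.I * (r:ℂ) * (x₀:ℂ)) / 2
      - ((T:ℂ) - (t:ℂ)) * (r:ℂ)^2 / 4 - (t:ℂ)/(4*(r:ℂ)^2)) *
    Complex.exp ((x':ℂ) * (Complex.I * ((r:ℂ) + (r:ℂ)⁻¹) / 2)))) * hco

lemma F1_ray2 (x₀ T : ℝ) (f₁ : ℂ → ℂ) (x' t : ℝ) {r : ℝ} (hr : 1 < r) :
    F1ker x₀ T f₁ x' t ((r:ℂ) * e₂) = Cc2 x₀ T t f₁ r * Complex.exp (-((x':ℂ) * Aa r)) := by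
  have hr0 : (r:ℂ) ≠ 0 := by
    simp only [ne_eq, Complex.ofReal_eq_zero]; intro h; linarith [h ▸ hr]
  have hk : ω * ((r:ℂ) * e₂) = -((r:ℂ) * Complex.I) := by
    rw [e2_eq, show ω * ((r:ℂ) * -e₁) = -((r:ℂ) * (ω * e₁)) by ring, omega_mul_e1]
  have him : ¬ (0:ℝ) < (-((r:ℂ) * Complex.I)).im := by
    simp only [Complex.neg_im, Complex.mul_I_im, Complex.ofReal_re]; linarith
  have hinv : 1 / (-((r:ℂ) * Complex.I)) = Complex.I / r := by
    rw [div_eq_div_iff (neg_ne_zero.mpr (mul_ne_zero hr0 Complex.I_ne_zero)) hr0]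
    linear_combination (r:ℂ) * Complex.I_sq
  have hft : ftilde0 f₁ (ω * ((r:ℂ) * e₂)) = f₁ (Complex.I / r) := by
    rw [hk, ftilde0, if_neg him, hinv]
  have he1sq : e₁ ^ 2 = -ω := by
    rw [e1_eq]
    rw [show (Complex.I * ω ^ 2)^2 = Complex.I^2 * (ω^3 * ω) by ring, Complex.I_sq, omega_cube]
    ring
  have hk2 : ((r:ℂ) * e₂)^2 = -(r:ℂ)^2 * ω := by
    rw [e2_eq, show ((r:ℂ) * -e₁)^2 = ((r:ℂ) * e₁)^2 by ring, mul_pow, he1sq]; ring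
  have hfac : ω ^ 2 - ω / ((r:ℂ) * e₂) ^ 2 = ω^2 + ((r:ℂ)^2)⁻¹ := by
    rw [hk2]; field_simp [omega_ne_zero]
    ring_nf
  rw [F1ker, hft, hfac, hk]
  rw [Cc2]
  have hπ : (Real.pi : ℂ) ≠ 0 := by
    simp only [ne_eq, Complex.ofReal_eq_zero]; exact Real.pi_ne_zero
  have hexp : ((x' - x₀ : ℝ) : ℂ) / 2 * (-((r:ℂ) * Complex.I))
      + ((T - t : ℝ) : ℂ) / 4 * (-((r:ℂ) * Complex.I)) ^ 2
      + (-((x' : ℂ) / 2) * (1 / (-((r:ℂ) * Complex.I)))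
        + (t : ℂ) / 4 * (1 / (-((r:ℂ) * Complex.I))) ^ 2)
      = (Complex.I * r * x₀) / 2 - ((T:ℂ) - t) * (r:ℂ)^2 / 4 - (t:ℂ)/(4*(r:ℂ)^2)
        + -((x':ℂ) * (Complex.I * ((r:ℂ) + (r:ℂ)⁻¹) / 2)) := by
    have hI := Complex.I_sq
    push_cast
    rw [hinv]
    linear_combination (((T:ℂ)-(t:ℂ))*(r:ℂ)^2/4 + (t:ℂ)*((r:ℂ)⁻¹)^2/4) * hI
  rw [Aa, ← Complex.exp_add, ← Complex.exp_add, hexp, Complex.exp_add]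
  ring

lemma hre_gen (z : ℂ) : ((z.re : ℝ) : ℂ) = (z + (starRingEnd ℂ) z) / 2 := by
  rw [Complex.add_conj]; push_cast; ring

lemma norm_ofReal_exp (s : ℝ) : ‖Complex.exp ((s:ℂ))‖ = Real.exp s := by
  rw [Complex.norm_exp, Complex.ofReal_re]

lemma norm_exp_re (z : ℂ) : ‖Complex.exp z‖ = Real.exp z.re := by
  rw [Complex.norm_exp]

lemma Aa_eq (r : ℝ) : Aa r = (((r + r⁻¹) / 2 : ℝ) : ℂ) * Complex.I := by
  rw [Aa]; push_cast; ring

lemma norm_exp_mul_Aa (x' r : ℝ) : ‖Complex.exp ((x':ℂ) * Aa r)‖ = 1 := by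
  rw [norm_exp_re, Aa_eq]
  have : ((x':ℂ) * (↑((r + r⁻¹)/2) * Complex.I)).re = 0 := by
    simp [Complex.mul_re]
  rw [this, Real.exp_zero]

lemma norm_exp_neg_mul_Aa (x' r : ℝ) : ‖Complex.exp (-((x':ℂ) * Aa r))‖ = 1 := by
  rw [norm_exp_re, Aa_eq]
  have : (-((x':ℂ) * (↑((r + r⁻¹)/2) * Complex.I))).re = 0 := by
    simp [Complex.mul_re]
  rw [this, Real.exp_zero]

lemma norm_Aa (r : ℝ) (hr : 1 < r) : ‖Aa r‖ = (r + r⁻¹) / 2 := by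
  rw [Aa_eq]
  rw [norm_mul, Complex.norm_real, Complex.norm_I, mul_one, Real.norm_eq_abs, abs_of_pos]
  have h0 : (0:ℝ) < r := lt_trans one_pos hr
  positivity

lemma re_add_mul_I (a b : ℝ) : ((a:ℂ) + (b:ℂ) * Complex.I).re = a := by simp

lemma norm_omega_sq_add (z : ℂ) : ‖ω ^ 2 + z‖ ≤ 1 + ‖z‖ := by
  calc ‖ω ^ 2 + z‖ ≤ ‖ω ^ 2‖ + ‖z‖ := norm_add_le _ _
  _ = 1 + ‖z‖ := by rw [norm_pow, abs_omega]; norm_num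

lemma norm_Cc1_le (x₀ T t : ℝ) (f₁ : ℂ → ℂ) (ht : 0 ≤ t) {r : ℝ} (hr : 1 < r) :
    ‖Cc1 x₀ T t f₁ r‖ ≤
      Real.exp (-(T - t) * r ^ 2 / 4) * ‖f₁ (Complex.I / (r:ℂ))‖ / Real.pi := by
  have h0 : (0:ℝ) < r := lt_trans one_pos hr
  have hr0 : (r:ℂ) ≠ 0 := by simp only [ne_eq, Complex.ofReal_eq_zero]; positivity
  rw [Cc1, norm_neg, norm_mul]
  have hz : -(Complex.I * (r:ℂ) * (x₀:ℂ)) / 2 - ((T:ℂ) - (t:ℂ)) * (r:ℂ)^2 / 4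
        - (t:ℂ)/(4*(r:ℂ)^2)
      = ((-(T - t) * r ^ 2 / 4 - t / (4 * r^2) : ℝ) : ℂ)
        + ((-(r*x₀/2) : ℝ):ℂ) * Complex.I := by
    push_cast
    ring
  rw [hz, norm_exp_re, re_add_mul_I]
  have hden : ‖2 * (Real.pi:ℂ) * Complex.I * (r:ℂ)^2‖ = 2 * Real.pi * r^2 := by
    rw [norm_mul, norm_mul, norm_mul, Complex.norm_I, Complex.norm_real, norm_pow,
      Complex.norm_real]
    simp [abs_of_pos Real.pi_pos, abs_of_pos h0]
  have h2 : ‖(starRingEnd ℂ) (f₁ (Complex.I / (r:ℂ))) * (ω^2 + (r:ℂ)^2)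
        / (2 * (Real.pi:ℂ) * Complex.I * (r:ℂ)^2)‖
      ≤ ‖f₁ (Complex.I / (r:ℂ))‖ * (2*r^2) / (2 * Real.pi * r^2) := by
    rw [norm_div, norm_mul, RCLike.norm_conj, hden]
    gcongr
    calc ‖ω^2 + (r:ℂ)^2‖ ≤ 1 + ‖((r^2:ℝ):ℂ)‖ := by push_cast; exact norm_omega_sq_add _
    _ = 1 + r^2 := by rw [Complex.norm_real, Real.norm_eq_abs, abs_of_pos (by positivity)]
    _ ≤ 2 * r^2 := by nlinarith
  calc Real.exp (-(T - t) * r ^ 2 / 4 - t / (4 * r^2)) * ‖_ / _‖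
      ≤ Real.exp (-(T - t) * r ^ 2 / 4) * (‖f₁ (Complex.I / (r:ℂ))‖ * (2*r^2)
          / (2 * Real.pi * r^2)) := by
        apply mul_le_mul _ h2 (norm_nonneg _) (Real.exp_pos _).le
        apply Real.exp_le_exp.2
        have : 0 ≤ t / (4 * r^2) := by positivity
        linarith
  _ = Real.exp (-(T - t) * r ^ 2 / 4) * ‖f₁ (Complex.I / (r:ℂ))‖ / Real.pi := by
        have hπ0 : Real.pi ≠ 0 := ne_of_gt Real.pi_pos
        have hr2 : r ^ 2 ≠ 0 := by positivity
        field_simp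

lemma norm_Cc2_le (x₀ T t : ℝ) (f₁ : ℂ → ℂ) (ht : 0 ≤ t) {r : ℝ} (hr : 1 < r) :
    ‖Cc2 x₀ T t f₁ r‖ ≤
      Real.exp (-(T - t) * r ^ 2 / 4) * ‖f₁ (Complex.I / (r:ℂ))‖ / Real.pi := by
  have h0 : (0:ℝ) < r := lt_trans one_pos hr
  rw [Cc2, norm_neg, norm_mul]
  have hz : (Complex.I * (r:ℂ) * (x₀:ℂ)) / 2 - ((T:ℂ) - (t:ℂ)) * (r:ℂ)^2 / 4
        - (t:ℂ)/(4*(r:ℂ)^2)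
      = ((-(T - t) * r ^ 2 / 4 - t / (4 * r^2) : ℝ) : ℂ)
        + (((r*x₀/2) : ℝ):ℂ) * Complex.I := by
    push_cast
    ring
  rw [hz, norm_exp_re, re_add_mul_I]
  have hden : ‖2 * (Real.pi:ℂ) * Complex.I‖ = 2 * Real.pi := by
    rw [norm_mul, norm_mul, Complex.norm_I, Complex.norm_real]
    simp [abs_of_pos Real.pi_pos]
  have h2 : ‖f₁ (Complex.I / (r:ℂ)) * (ω^2 + ((r:ℂ)^2)⁻¹) / (2 * (Real.pi:ℂ) * Complex.I)‖
      ≤ ‖f₁ (Complex.I / (r:ℂ))‖ * 2 / (2 * Real.pi) := by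
    rw [norm_div, norm_mul, hden]
    gcongr
    calc ‖ω^2 + ((r:ℂ)^2)⁻¹‖ ≤ 1 + ‖(((r^2)⁻¹:ℝ):ℂ)‖ := by push_cast; exact norm_omega_sq_add _
    _ = 1 + (r^2)⁻¹ := by rw [Complex.norm_real, Real.norm_eq_abs, abs_of_pos (by positivity)]
    _ ≤ 2 := by
        have h1 : (r^2)⁻¹ ≤ 1 := by
          rw [inv_le_one_iff₀]; right; nlinarith
        linarith
  calc Real.exp (-(T - t) * r ^ 2 / 4 - t / (4 * r^2)) * ‖_ / _‖
      ≤ Real.exp (-(T - t) * r ^ 2 / 4) * (‖f₁ (Complex.I / (r:ℂ))‖ * 2 / (2 * Real.pi)) := by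
        apply mul_le_mul _ h2 (norm_nonneg _) (Real.exp_pos _).le
        apply Real.exp_le_exp.2
        have : 0 ≤ t / (4 * r^2) := by positivity
        linarith
  _ = Real.exp (-(T - t) * r ^ 2 / 4) * ‖f₁ (Complex.I / (r:ℂ))‖ / Real.pi := by
        have hπ0 : Real.pi ≠ 0 := ne_of_gt Real.pi_pos
        field_simp


lemma contOn_f (f₁ : ℂ → ℂ)
    (hsmooth : ContDiffOn ℝ (⊤ : ℕ∞) (fun y : ℝ => f₁ (Complex.I * (y : ℂ))) (Set.Ioo (0:ℝ) 1)) :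
    ContinuousOn (fun r : ℝ => f₁ (Complex.I / (r:ℂ))) (Set.Ioi (1:ℝ)) := by
  have h1 : ContinuousOn (fun y : ℝ => f₁ (Complex.I * (y : ℂ))) (Set.Ioo (0:ℝ) 1) :=
    hsmooth.continuousOn
  have h2 : ContinuousOn (fun r : ℝ => r⁻¹) (Set.Ioi (1:ℝ)) := by
    apply ContinuousOn.inv₀ continuousOn_id
    intro r hr
    have : (1:ℝ) < r := hr
    positivity
  have hmaps : Set.MapsTo (fun r : ℝ => r⁻¹) (Set.Ioi (1:ℝ)) (Set.Ioo (0:ℝ) 1) := by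
    intro r hr
    have h1r : (1:ℝ) < r := hr
    constructor
    · positivity
    · rw [inv_lt_one_iff₀]; right; exact h1r
  have h3 := h1.comp h2 hmaps
  apply h3.congr
  intro r hr
  have h1r : (1:ℝ) < r := hr
  have : Complex.I * ((r⁻¹ : ℝ) : ℂ) = Complex.I / (r:ℂ) := by
    push_cast
    ring
  simp only [Function.comp_apply, this]

lemma contOn_Cc1 (x₀ T t : ℝ) (f₁ : ℂ → ℂ)
    (hsmooth : ContDiffOn ℝ (⊤ : ℕ∞) (fun y : ℝ => f₁ (Complex.I * (y : ℂ))) (Set.Ioo (0:ℝ) 1)) :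
    ContinuousOn (fun r : ℝ => Cc1 x₀ T t f₁ r) (Set.Ioi (1:ℝ)) := by
  have hf := contOn_f f₁ hsmooth
  have hr0 : ∀ r ∈ Set.Ioi (1:ℝ), (r:ℂ) ≠ 0 := by
    intro r hr
    have : (1:ℝ) < r := hr
    simp only [ne_eq, Complex.ofReal_eq_zero]
    positivity
  have hcr : ContinuousOn (fun r : ℝ => ((r:ℂ))) (Set.Ioi (1:ℝ)) :=
    Complex.continuous_ofReal.continuousOn
  unfold Cc1
  apply ContinuousOn.neg
  apply ContinuousOn.mul
  · apply Complex.continuous_exp.comp_continuousOn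
    apply ContinuousOn.sub
    apply ContinuousOn.sub
    · fun_prop
    · fun_prop
    · apply ContinuousOn.div (by fun_prop) (by fun_prop)
      intro r hr
      have h1 : (r:ℂ) ≠ 0 := hr0 r hr
      intro h
      apply h1
      have : (4:ℂ) * (r:ℂ)^2 = 0 := h
      simpa [pow_eq_zero_iff] using this
  · apply ContinuousOn.div
    · apply ContinuousOn.mul
      · exact Complex.continuous_conj.comp_continuousOn hf
      · fun_prop
    · fun_prop
    · intro r hr
      have h1 : (r:ℂ) ≠ 0 := hr0 r hr
      have hπ : (Real.pi:ℂ) ≠ 0 := by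
        simp only [ne_eq, Complex.ofReal_eq_zero]; exact Real.pi_ne_zero
      intro h
      rcases mul_eq_zero.1 h with h' | h'
      · rcases mul_eq_zero.1 h' with h'' | h''
        · rcases mul_eq_zero.1 h'' with h3 | h3
          · norm_num at h3
          · exact hπ h3
        · exact Complex.I_ne_zero h''
      · exact (h1 ((pow_eq_zero_iff two_ne_zero).1 h')).elim

lemma contOn_Cc2 (x₀ T t : ℝ) (f₁ : ℂ → ℂ)
    (hsmooth : ContDiffOn ℝ (⊤ : ℕ∞) (fun y : ℝ => f₁ (Complex.I * (y : ℂ))) (Set.Ioo (0:ℝ) 1)) :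
    ContinuousOn (fun r : ℝ => Cc2 x₀ T t f₁ r) (Set.Ioi (1:ℝ)) := by
  have hf := contOn_f f₁ hsmooth
  have hr0 : ∀ r ∈ Set.Ioi (1:ℝ), (r:ℂ) ≠ 0 := by
    intro r hr
    have : (1:ℝ) < r := hr
    simp only [ne_eq, Complex.ofReal_eq_zero]
    positivity
  unfold Cc2
  apply ContinuousOn.neg
  apply ContinuousOn.mul
  · apply Complex.continuous_exp.comp_continuousOn
    apply ContinuousOn.sub
    apply ContinuousOn.sub
    · fun_prop
    · fun_prop
    · apply ContinuousOn.div (by fun_prop) (by fun_prop)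
      intro r hr
      have h1 : (r:ℂ) ≠ 0 := hr0 r hr
      intro h
      apply h1
      have : (4:ℂ) * (r:ℂ)^2 = 0 := h
      simpa [pow_eq_zero_iff] using this
  · apply ContinuousOn.div
    · apply ContinuousOn.mul hf
      apply ContinuousOn.add continuousOn_const
      apply ContinuousOn.inv₀ (by fun_prop)
      intro r hr
      have h1 : (r:ℂ) ≠ 0 := hr0 r hr
      exact pow_ne_zero 2 h1
    · exact continuousOn_const
    · intro r hr
      have hπ : (Real.pi:ℂ) ≠ 0 := by
        simp only [ne_eq, Complex.ofReal_eq_zero]; exact Real.pi_ne_zero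
      intro h
      rcases mul_eq_zero.1 h with h' | h'
      · rcases mul_eq_zero.1 h' with h'' | h''
        · norm_num at h''
        · exact hπ h''
      · exact Complex.I_ne_zero h'

lemma contOn_Aa : ContinuousOn (fun r : ℝ => Aa r) (Set.Ioi (1:ℝ)) := by
  unfold Aa
  apply ContinuousOn.div _ continuousOn_const (by norm_num)
  apply ContinuousOn.mul continuousOn_const
  apply ContinuousOn.add (Complex.continuous_ofReal.continuousOn)
  apply ContinuousOn.inv₀ (Complex.continuous_ofReal.continuousOn)
  intro r hr
  have : (1:ℝ) < r := hr
  simp only [ne_eq, Complex.ofReal_eq_zero]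
  positivity


lemma conj_exp_eq (z w : ℂ) (h : (starRingEnd ℂ) z = w) :
    (starRingEnd ℂ) (Complex.exp z) = Complex.exp w := by
  rw [← Complex.exp_conj, h]

lemma pointwise_key (x₀ T x t : ℝ) (f₁ : ℂ → ℂ) {r : ℝ} (hr : 1 < r) :
    Aa r * (Cc1 x₀ T t f₁ r * Complex.exp ((x:ℂ) * Aa r)) * e₁ +
      -Aa r * (Cc2 x₀ T t f₁ r * Complex.exp (-((x:ℂ) * Aa r))) * e₂ =
    (1 / ((Real.pi : ℂ) * Complex.I)) *
      ((Real.exp (-(T - t) * r ^ 2 / 4) * Real.exp (-(t / (4 * r ^ 2))) * ((r + 1 / r) / 2) *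
        (Complex.exp (-(((x - x₀ : ℝ) : ℂ) / 2) * (Complex.I * (r : ℂ))) *
          Complex.exp (-((x : ℂ) / 2) * (Complex.I / (r : ℂ))) *
          f₁ (Complex.I / (r : ℂ)) * (ω + ω ^ 2 / (r : ℂ) ^ 2)).re : ℝ) : ℂ) := by
  have h0 : (0:ℝ) < r := lt_trans one_pos hr
  have hr0 : (r:ℂ) ≠ 0 := by simp only [ne_eq, Complex.ofReal_eq_zero]; positivity
  have hπ : (Real.pi : ℂ) ≠ 0 := by
    simp only [ne_eq, Complex.ofReal_eq_zero]; exact Real.pi_ne_zero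
  have hI := Complex.I_sq
  have hω3 := omega_cube
  have hrr : (r:ℂ) * (r:ℂ)⁻¹ = 1 := mul_inv_cancel₀ hr0
  have hII : Complex.I * Complex.I⁻¹ = 1 := mul_inv_cancel₀ Complex.I_ne_zero
  have hππ : (Real.pi:ℂ) * ((Real.pi:ℂ))⁻¹ = 1 := mul_inv_cancel₀ hπ
  -- canonical atoms
  set E1 : ℂ := Complex.exp (-(((T:ℂ) - (t:ℂ)) * (r:ℂ)^2 / 4)) with hE1
  set E2 : ℂ := Complex.exp (-((t:ℂ) / (4 * (r:ℂ)^2))) with hE2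
  set P3 : ℂ := Complex.exp (Complex.I * (x:ℂ) * (r:ℂ) / 2) with hP3
  set M3 : ℂ := Complex.exp (-(Complex.I * (x:ℂ) * (r:ℂ) / 2)) with hM3
  set P4 : ℂ := Complex.exp (Complex.I * (x:ℂ) / (2 * (r:ℂ))) with hP4
  set M4 : ℂ := Complex.exp (-(Complex.I * (x:ℂ) / (2 * (r:ℂ)))) with hM4
  set P5 : ℂ := Complex.exp (Complex.I * (x₀:ℂ) * (r:ℂ) / 2) with hP5
  set M5 : ℂ := Complex.exp (-(Complex.I * (x₀:ℂ) * (r:ℂ) / 2)) with hM5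
  -- split the left-hand side pieces
  have hCc1 : Cc1 x₀ T t f₁ r
      = -((E1 * E2 * M5) * ((starRingEnd ℂ) (f₁ (Complex.I / (r:ℂ))) * (ω^2 + (r:ℂ)^2)
          / (2 * (Real.pi:ℂ) * Complex.I * (r:ℂ)^2))) := by
    rw [Cc1, hE1, hE2, hM5, ← Complex.exp_add, ← Complex.exp_add]
    rw [show -(((T:ℂ) - (t:ℂ)) * (r:ℂ)^2 / 4) + -((t:ℂ) / (4 * (r:ℂ)^2))
        + -(Complex.I * (x₀:ℂ) * (r:ℂ) / 2)
        = -(Complex.I * (r:ℂ) * (x₀:ℂ)) / 2 - ((T:ℂ) - (t:ℂ)) * (r:ℂ)^2 / 4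
          - (t:ℂ)/(4*(r:ℂ)^2) by ring]
  have hCc2 : Cc2 x₀ T t f₁ r
      = -((E1 * E2 * P5) * (f₁ (Complex.I / (r:ℂ)) * (ω^2 + ((r:ℂ)^2)⁻¹)
          / (2 * (Real.pi:ℂ) * Complex.I))) := by
    rw [Cc2, hE1, hE2, hP5, ← Complex.exp_add, ← Complex.exp_add]
    rw [show -(((T:ℂ) - (t:ℂ)) * (r:ℂ)^2 / 4) + -((t:ℂ) / (4 * (r:ℂ)^2))
        + Complex.I * (x₀:ℂ) * (r:ℂ) / 2
        = (Complex.I * (r:ℂ) * (x₀:ℂ)) / 2 - ((T:ℂ) - (t:ℂ)) * (r:ℂ)^2 / 4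
          - (t:ℂ)/(4*(r:ℂ)^2) by ring]
  have hxA : Complex.exp ((x:ℂ) * Aa r) = P3 * P4 := by
    rw [Aa, hP3, hP4, ← Complex.exp_add]
    congr 1
    field_simp
  have hxAm : Complex.exp (-((x:ℂ) * Aa r)) = M3 * M4 := by
    rw [Aa, hM3, hM4, ← Complex.exp_add]
    congr 1
    field_simp
    ring
  -- right-hand side pieces
  have hw1 : Complex.exp (-(((x - x₀ : ℝ) : ℂ) / 2) * (Complex.I * (r : ℂ))) = M3 * P5 := by
    rw [hM3, hP5, ← Complex.exp_add]
    congr 1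
    push_cast
    ring
  have hw2 : Complex.exp (-((x : ℂ) / 2) * (Complex.I / (r : ℂ))) = M4 := by
    rw [hM4]
    congr 1
    ring
  have hcM3P5 : (starRingEnd ℂ) (M3 * P5) = P3 * M5 := by
    rw [map_mul, hM3, hP3, hP5, hM5, conj_exp_eq _ (Complex.I * (x:ℂ) * (r:ℂ) / 2) (by
      simp only [map_neg, map_div₀, map_mul, Complex.conj_I, Complex.conj_ofReal, map_ofNat]
      ring), conj_exp_eq _ (-(Complex.I * (x₀:ℂ) * (r:ℂ) / 2)) (by
      simp only [map_div₀, map_mul, Complex.conj_I, Complex.conj_ofReal, map_ofNat]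
      ring)]
  have hcM4 : (starRingEnd ℂ) M4 = P4 := by
    rw [hM4, hP4, conj_exp_eq _ (Complex.I * (x:ℂ) / (2 * (r:ℂ))) (by
      simp only [map_neg, map_div₀, map_mul, Complex.conj_I, Complex.conj_ofReal, map_ofNat]
      ring)]
  have hcw : (starRingEnd ℂ) (ω + ω ^ 2 / (r : ℂ) ^ 2) = ω^2 + (ω^2)^2 / (r:ℂ)^2 := by
    simp only [map_add, map_div₀, map_pow, conj_omega, Complex.conj_ofReal]
  have hrexp1 : ((Real.exp (-(T - t) * r ^ 2 / 4) : ℝ) : ℂ) = E1 := by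
    rw [hE1, Complex.ofReal_exp]
    congr 1
    push_cast
    ring
  have hrexp2 : ((Real.exp (-(t / (4 * r ^ 2))) : ℝ) : ℂ) = E2 := by
    rw [hE2, Complex.ofReal_exp]
    congr 1
    push_cast
    ring
  -- assemble
  rw [hCc1, hCc2, hxA, hxAm, e2_eq, e1_eq]
  rw [Complex.ofReal_mul, Complex.ofReal_mul, Complex.ofReal_mul, hrexp1, hrexp2, hre_gen]
  rw [hw1, hw2, map_mul, map_mul, map_mul, hcM3P5, hcM4, hcw]
  rw [Aa]
  push_cast
  have hc1 : Complex.I * ((r:ℂ) + (r:ℂ)⁻¹) / 2 *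
        -((ω^2 + (r:ℂ)^2) / (2 * (Real.pi:ℂ) * Complex.I * (r:ℂ)^2)) * (Complex.I * ω^2)
      = 1 / ((Real.pi:ℂ) * Complex.I) * (((r:ℂ) + 1/(r:ℂ)) / 2)
        * ((ω^2 + (ω^2)^2/(r:ℂ)^2) / 2) := by
    have hA : Complex.I ^ 3 * Complex.I⁻¹ = -1 := by
      rw [pow_succ, mul_assoc, hII, mul_one, hI]
    have hB : (r:ℂ)^3 * ((r:ℂ)⁻¹)^3 = 1 := by rw [← mul_pow, hrr, one_pow]
    field_simp
    linear_combination (-((r:ℂ)^2+1)*ω^2*(ω^2+(r:ℂ)^2)) * hI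
  have hc2 : -(Complex.I * ((r:ℂ) + (r:ℂ)⁻¹) / 2) *
        -((ω^2 + ((r:ℂ)^2)⁻¹) / (2 * (Real.pi:ℂ) * Complex.I)) * -(Complex.I * ω^2)
      = 1 / ((Real.pi:ℂ) * Complex.I) * (((r:ℂ) + 1/(r:ℂ)) / 2)
        * ((ω + ω^2/(r:ℂ)^2) / 2) := by
    have hA : Complex.I ^ 3 * Complex.I⁻¹ = -1 := by
      rw [pow_succ, mul_assoc, hII, mul_one, hI]
    have hB : (r:ℂ)^3 * ((r:ℂ)⁻¹)^3 = 1 := by rw [← mul_pow, hrr, one_pow]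
    field_simp
    linear_combination (-((r:ℂ)^2+1)*ω^2*((r:ℂ)^2*ω^2+1)) * hI
      + (((r:ℂ)^2+1)*(r:ℂ)^2*ω) * hω3
  linear_combination (E1 * E2 * M5 * P3 * P4 * (starRingEnd ℂ) (f₁ (Complex.I / (r:ℂ)))) * hc1
    + (E1 * E2 * P5 * M3 * M4 * f₁ (Complex.I / (r:ℂ))) * hc2

lemma exp_decay_mul {T t r : ℝ} (htT : t < T) (hr : 1 < r) :
    Real.exp (-(T - t) * r^2/4) * r ≤ 4/(T-t)/r := by
  have hε : 0 < T - t := by linarith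
  have h0 : (0:ℝ) < r := lt_trans one_pos hr
  have h1 : (T - t)/4 * r^2 ≤ Real.exp ((T-t)*r^2/4) := by
    have := Real.add_one_le_exp ((T-t)*r^2/4)
    nlinarith
  have hexppos := Real.exp_pos ((T-t)*r^2/4)
  have hrw : Real.exp (-(T - t) * r^2/4) = (Real.exp ((T-t)*r^2/4))⁻¹ := by
    rw [← Real.exp_neg]; congr 1; ring
  rw [hrw, show (Real.exp ((T-t)*r^2/4))⁻¹ * r = r / Real.exp ((T-t)*r^2/4) by ring,
    div_div, div_le_div_iff₀ hexppos (by positivity)]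
  nlinarith

lemma exp_decay_one {T t r : ℝ} (htT : t < T) (hr : 1 < r) :
    Real.exp (-(T - t) * r^2/4) ≤ 4/(T-t)/r := by
  have h0 : (0:ℝ) < r := lt_trans one_pos hr
  calc Real.exp (-(T - t) * r^2/4) = Real.exp (-(T - t) * r^2/4) * 1 := by ring
  _ ≤ Real.exp (-(T - t) * r^2/4) * r := by
      have := (Real.exp_pos (-(T - t) * r^2/4)).le
      nlinarith
  _ ≤ 4/(T-t)/r := exp_decay_mul htT hr

end Paper


/-- The explicit formula for `∂ₓ m₁^{(1)}(x,t)` (the computation before Theorem 5.3). -/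
theorem statement_12 (x₀ T M : ℝ) (hT : 0 < T) (hM : 2 ≤ M) (f₁ : ℂ → ℂ)
    (hsmooth : ContDiffOn ℝ (⊤ : ℕ∞) (fun y : ℝ => f₁ (Complex.I * (y : ℂ))) (Set.Ioo (0 : ℝ) 1))
    (hvanish : ∀ y ∈ Set.Icc (1 / 2 : ℝ) 1, f₁ (Complex.I * (y : ℂ)) = 0)
    (hL1 : IntegrableOn (fun y : ℝ => ‖f₁ (Complex.I / (y : ℂ))‖ / y) (Set.Ioi 1))
    (hL1le : ∫ y in Set.Ioi (1 : ℝ), ‖f₁ (Complex.I / (y : ℂ))‖ / y ≤ 1 / M)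
    (x t : ℝ) (ht : t ∈ Set.Ico (0 : ℝ) T) :
    deriv (fun x' => m1Seq x₀ T f₁ x' t 0) x =
      (1 / ((Real.pi : ℂ) * Complex.I)) *
        ((∫ y in Set.Ioi (1 : ℝ),
          Real.exp (-(T - t) * y ^ 2 / 4) * Real.exp (-(t / (4 * y ^ 2))) * ((y + 1 / y) / 2) *
            (Complex.exp (-(((x - x₀ : ℝ) : ℂ) / 2) * (Complex.I * (y : ℂ))) *
              Complex.exp (-((x : ℂ) / 2) * (Complex.I / (y : ℂ))) *
              f₁ (Complex.I / (y : ℂ)) * (ω + ω ^ 2 / (y : ℂ) ^ 2)).re : ℝ) : ℂ) := by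
  obtain ⟨ht0, htT⟩ := ht
  have hε : (0:ℝ) < T - t := by linarith
  have hπpos := Real.pi_pos
  -- the dominating function
  set bound : ℝ → ℝ := fun r => ((4/(T-t)) * (1/Real.pi)) * (‖f₁ (Complex.I / (r:ℂ))‖ / r)
    with hbounddef
  have hbound_int : Integrable bound (volume.restrict (Set.Ioi 1)) :=
    hL1.const_mul ((4/(T-t)) * (1/Real.pi))
  -- measurability
  have hmeas1 : ∀ x' : ℝ, AEStronglyMeasurable
      (fun r : ℝ => Cc1 x₀ T t f₁ r * Complex.exp ((x':ℂ) * Aa r))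
      (volume.restrict (Set.Ioi 1)) := by
    intro x'
    apply ContinuousOn.aestronglyMeasurable _ measurableSet_Ioi
    exact (contOn_Cc1 x₀ T t f₁ hsmooth).mul
      (Complex.continuous_exp.comp_continuousOn (continuousOn_const.mul contOn_Aa))
  have hmeas2 : ∀ x' : ℝ, AEStronglyMeasurable
      (fun r : ℝ => Cc2 x₀ T t f₁ r * Complex.exp (-((x':ℂ) * Aa r)))
      (volume.restrict (Set.Ioi 1)) := by
    intro x'
    apply ContinuousOn.aestronglyMeasurable _ measurableSet_Ioi
    exact (contOn_Cc2 x₀ T t f₁ hsmooth).mul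
      (Complex.continuous_exp.comp_continuousOn (continuousOn_const.mul contOn_Aa).neg)
  have hmeas1' : AEStronglyMeasurable
      (fun r : ℝ => Aa r * (Cc1 x₀ T t f₁ r * Complex.exp ((x:ℂ) * Aa r)))
      (volume.restrict (Set.Ioi 1)) := by
    apply ContinuousOn.aestronglyMeasurable _ measurableSet_Ioi
    exact contOn_Aa.mul ((contOn_Cc1 x₀ T t f₁ hsmooth).mul
      (Complex.continuous_exp.comp_continuousOn (continuousOn_const.mul contOn_Aa)))
  have hmeas2' : AEStronglyMeasurable
      (fun r : ℝ => -Aa r * (Cc2 x₀ T t f₁ r * Complex.exp (-((x:ℂ) * Aa r))))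
      (volume.restrict (Set.Ioi 1)) := by
    apply ContinuousOn.aestronglyMeasurable _ measurableSet_Ioi
    exact contOn_Aa.neg.mul ((contOn_Cc2 x₀ T t f₁ hsmooth).mul
      (Complex.continuous_exp.comp_continuousOn (continuousOn_const.mul contOn_Aa).neg))
  -- norm bounds
  have hb1 : ∀ x' : ℝ, ∀ r ∈ Set.Ioi (1:ℝ),
      ‖Cc1 x₀ T t f₁ r * Complex.exp ((x':ℂ) * Aa r)‖ ≤ bound r := by
    intro x' r hr
    have hr1 : (1:ℝ) < r := hr
    have h0 : (0:ℝ) < r := lt_trans one_pos hr1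
    rw [norm_mul, norm_exp_mul_Aa, mul_one]
    calc ‖Cc1 x₀ T t f₁ r‖
        ≤ Real.exp (-(T - t) * r ^ 2 / 4) * ‖f₁ (Complex.I / (r:ℂ))‖ / Real.pi :=
          norm_Cc1_le x₀ T t f₁ ht0 hr1
    _ ≤ (4/(T-t)/r) * ‖f₁ (Complex.I / (r:ℂ))‖ / Real.pi := by
          gcongr
          exact exp_decay_one htT hr1
    _ = bound r := by rw [hbounddef]; ring
  have hb2 : ∀ x' : ℝ, ∀ r ∈ Set.Ioi (1:ℝ),
      ‖Cc2 x₀ T t f₁ r * Complex.exp (-((x':ℂ) * Aa r))‖ ≤ bound r := by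
    intro x' r hr
    have hr1 : (1:ℝ) < r := hr
    have h0 : (0:ℝ) < r := lt_trans one_pos hr1
    rw [norm_mul, norm_exp_neg_mul_Aa, mul_one]
    calc ‖Cc2 x₀ T t f₁ r‖
        ≤ Real.exp (-(T - t) * r ^ 2 / 4) * ‖f₁ (Complex.I / (r:ℂ))‖ / Real.pi :=
          norm_Cc2_le x₀ T t f₁ ht0 hr1
    _ ≤ (4/(T-t)/r) * ‖f₁ (Complex.I / (r:ℂ))‖ / Real.pi := by
          gcongr
          exact exp_decay_one htT hr1
    _ = bound r := by rw [hbounddef]; ring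
  have hb1' : ∀ x' : ℝ, ∀ r ∈ Set.Ioi (1:ℝ),
      ‖Aa r * (Cc1 x₀ T t f₁ r * Complex.exp ((x':ℂ) * Aa r))‖ ≤ bound r := by
    intro x' r hr
    have hr1 : (1:ℝ) < r := hr
    have h0 : (0:ℝ) < r := lt_trans one_pos hr1
    rw [norm_mul, norm_mul, norm_exp_mul_Aa, mul_one, norm_Aa r hr1]
    have hAa : (r + r⁻¹)/2 ≤ r := by
      have h1 : r⁻¹ ≤ 1 := by
        rw [inv_le_one_iff₀]; right; exact hr1.le
      linarith
    calc (r + r⁻¹)/2 * ‖Cc1 x₀ T t f₁ r‖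
        ≤ r * (Real.exp (-(T - t) * r ^ 2 / 4) * ‖f₁ (Complex.I / (r:ℂ))‖ / Real.pi) := by
          apply mul_le_mul hAa (norm_Cc1_le x₀ T t f₁ ht0 hr1) (norm_nonneg _) h0.le
    _ = (Real.exp (-(T - t) * r ^ 2 / 4) * r) * (‖f₁ (Complex.I / (r:ℂ))‖ / Real.pi) := by
          ring
    _ ≤ (4/(T-t)/r) * (‖f₁ (Complex.I / (r:ℂ))‖ / Real.pi) := by
          gcongr
          exact exp_decay_mul htT hr1
    _ = bound r := by rw [hbounddef]; ring
  have hb2' : ∀ x' : ℝ, ∀ r ∈ Set.Ioi (1:ℝ),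
      ‖-Aa r * (Cc2 x₀ T t f₁ r * Complex.exp (-((x':ℂ) * Aa r)))‖ ≤ bound r := by
    intro x' r hr
    have hr1 : (1:ℝ) < r := hr
    have h0 : (0:ℝ) < r := lt_trans one_pos hr1
    rw [norm_mul, norm_neg, norm_mul, norm_exp_neg_mul_Aa, mul_one, norm_Aa r hr1]
    have hAa : (r + r⁻¹)/2 ≤ r := by
      have h1 : r⁻¹ ≤ 1 := by
        rw [inv_le_one_iff₀]; right; exact hr1.le
      linarith
    calc (r + r⁻¹)/2 * ‖Cc2 x₀ T t f₁ r‖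
        ≤ r * (Real.exp (-(T - t) * r ^ 2 / 4) * ‖f₁ (Complex.I / (r:ℂ))‖ / Real.pi) := by
          apply mul_le_mul hAa (norm_Cc2_le x₀ T t f₁ ht0 hr1) (norm_nonneg _) h0.le
    _ = (Real.exp (-(T - t) * r ^ 2 / 4) * r) * (‖f₁ (Complex.I / (r:ℂ))‖ / Real.pi) := by
          ring
    _ ≤ (4/(T-t)/r) * (‖f₁ (Complex.I / (r:ℂ))‖ / Real.pi) := by
          gcongr
          exact exp_decay_mul htT hr1
    _ = bound r := by rw [hbounddef]; ring
  -- derivatives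
  have hd1 : ∀ (x' : ℝ) (r : ℝ), HasDerivAt
      (fun y : ℝ => Cc1 x₀ T t f₁ r * Complex.exp ((y:ℂ) * Aa r))
      (Aa r * (Cc1 x₀ T t f₁ r * Complex.exp ((x':ℂ) * Aa r))) x' := by
    intro x' r
    have h0 : HasDerivAt (fun y : ℝ => ((y:ℂ))) 1 x' := Complex.ofRealCLM.hasDerivAt
    have h2 := ((h0.mul_const (Aa r)).cexp).const_mul (Cc1 x₀ T t f₁ r)
    exact h2.congr_deriv (by ring)
  have hd2 : ∀ (x' : ℝ) (r : ℝ), HasDerivAt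
      (fun y : ℝ => Cc2 x₀ T t f₁ r * Complex.exp (-((y:ℂ) * Aa r)))
      (-Aa r * (Cc2 x₀ T t f₁ r * Complex.exp (-((x':ℂ) * Aa r)))) x' := by
    intro x' r
    have h0 : HasDerivAt (fun y : ℝ => ((y:ℂ))) 1 x' := Complex.ofRealCLM.hasDerivAt
    have h2 := (((h0.mul_const (Aa r)).neg).cexp).const_mul (Cc2 x₀ T t f₁ r)
    exact h2.congr_deriv (by simp only [Pi.neg_apply]; ring)
  -- dominated convergence for derivatives
  have key1 := hasDerivAt_integral_of_dominated_loc_of_deriv_le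
    (F := fun (x' : ℝ) (r : ℝ) => Cc1 x₀ T t f₁ r * Complex.exp ((x':ℂ) * Aa r))
    (F' := fun (x' : ℝ) (r : ℝ) => Aa r * (Cc1 x₀ T t f₁ r * Complex.exp ((x':ℂ) * Aa r)))
    (x₀ := x) (s := Metric.ball x 1) (bound := bound) (Metric.ball_mem_nhds x one_pos)
    (Filter.Eventually.of_forall fun x' => hmeas1 x')
    (Integrable.mono' hbound_int (hmeas1 x)
      (((ae_restrict_iff' measurableSet_Ioi).2 (Filter.Eventually.of_forall fun r hr =>
        hb1 x r hr))))
    hmeas1'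
    (((ae_restrict_iff' measurableSet_Ioi).2 (Filter.Eventually.of_forall fun r hr =>
      fun x' _ => hb1' x' r hr)))
    hbound_int
    (Filter.Eventually.of_forall fun r => fun x' _ => hd1 x' r)
  have key2 := hasDerivAt_integral_of_dominated_loc_of_deriv_le
    (F := fun (x' : ℝ) (r : ℝ) => Cc2 x₀ T t f₁ r * Complex.exp (-((x':ℂ) * Aa r)))
    (F' := fun (x' : ℝ) (r : ℝ) => -Aa r * (Cc2 x₀ T t f₁ r * Complex.exp (-((x':ℂ) * Aa r))))
    (x₀ := x) (s := Metric.ball x 1) (bound := bound) (Metric.ball_mem_nhds x one_pos)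
    (Filter.Eventually.of_forall fun x' => hmeas2 x')
    (Integrable.mono' hbound_int (hmeas2 x)
      (((ae_restrict_iff' measurableSet_Ioi).2 (Filter.Eventually.of_forall fun r hr =>
        hb2 x r hr))))
    hmeas2'
    (((ae_restrict_iff' measurableSet_Ioi).2 (Filter.Eventually.of_forall fun r hr =>
      fun x' _ => hb2' x' r hr)))
    hbound_int
    (Filter.Eventually.of_forall fun r => fun x' _ => hd2 x' r)
  obtain ⟨hint1, hder1⟩ := key1
  obtain ⟨hint2, hder2⟩ := key2
  have hsum := (hder1.mul_const e₁).add (hder2.mul_const e₂)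
  -- identify the function
  have hfe : (fun x' : ℝ => m1Seq x₀ T f₁ x' t 0)
      = fun x' : ℝ =>
        (∫ r in Set.Ioi (1:ℝ), Cc1 x₀ T t f₁ r * Complex.exp ((x':ℂ) * Aa r)) * e₁ +
        (∫ r in Set.Ioi (1:ℝ), Cc2 x₀ T t f₁ r * Complex.exp (-((x':ℂ) * Aa r))) * e₂ := by
    funext x'
    rw [m1Seq, contourInt]
    congr 1
    · congr 1
      apply setIntegral_congr_fun measurableSet_Ioi
      intro r hr
      simp only [mSeq, mul_one]
      exact F1_ray1 x₀ T f₁ x' t hr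
    · congr 1
      apply setIntegral_congr_fun measurableSet_Ioi
      intro r hr
      simp only [mSeq, mul_one]
      exact F1_ray2 x₀ T f₁ x' t hr
  rw [hfe]
  erw [hsum.deriv]
  rw [← integral_mul_const, ← integral_mul_const]
  rw [← integral_add (hint1.mul_const e₁) (hint2.mul_const e₂)]
  refine Eq.trans (setIntegral_congr_fun measurableSet_Ioi
    (fun r hr => pointwise_key x₀ T x t f₁ hr)) ?_
  rw [integral_const_mul]
  congr 1
  exact integral_ofReal
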